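/- arXiv:1902.08980 — 2 statements merged into one kernel-verified Lean document; each statement's English description precedes it below -/
import Mathlib

section
/- Let Q be a rack and N a subgroup of Dis(Q) that is normal in LMlt(Q). Then the relation con_N = {(a,b) : L_a L_b^{-1} ∈ N} is a congruence of Q. -/
structure LeftQuasigroup (Q : Type*) where
  op : Q → Q → Q
  dv : Q → Q → Q
  dv_op : ∀ x y, dv x (op x y) = y
  op_dv : ∀ x y, op x (dv x y) = y

namespace LeftQuasigroup

variable {Q : Type*} (S : LeftQuasigroup Q)

/-- The left translation by `a`, as a permutation of `Q`. -/
def L (a : Q) : Equiv.Perm Q :=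
  ⟨S.op a, S.dv a, S.dv_op a, S.op_dv a⟩

/-- The left multiplication group. -/
def LMlt : Subgroup (Equiv.Perm Q) :=
  Subgroup.closure (Set.range S.L)

/-- The displacement group. -/
def Dis : Subgroup (Equiv.Perm Q) :=
  Subgroup.closure { f | ∃ a b, f = S.L a * (S.L b)⁻¹ }

/-- `α` is a congruence of the left quasigroup. -/
def IsCongruence (α : Q → Q → Prop) : Prop :=
  Equivalence α ∧
  (∀ a b c d, α a b → α c d → α (S.op a c) (S.op b d)) ∧
  (∀ a b c d, α a b → α c d → α (S.dv a c) (S.dv b d))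

/-- The displacement group relative to `α`: the smallest normal subgroup of
`LMlt` containing all `L a * (L b)⁻¹` with `α a b`, given explicitly as the
subgroup generated by the `LMlt`-conjugates of such elements. -/
def DisRel (α : Q → Q → Prop) : Subgroup (Equiv.Perm Q) :=
  Subgroup.closure
    { f | ∃ g ∈ S.LMlt, ∃ a b, α a b ∧ f = g * (S.L a * (S.L b)⁻¹) * g⁻¹ }

/-- The set `Dis^α = {h ∈ Dis(Q) : h(a) α a for all a}`. -/
def DisUpSet (α : Q → Q → Prop) : Set (Equiv.Perm Q) :=
  { h | h ∈ S.Dis ∧ ∀ a, α (h a) a }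

/-- Left self-distributivity, making a left quasigroup a rack. -/
def IsRack : Prop :=
  ∀ x y z, S.op x (S.op y z) = S.op (S.op x y) (S.op x z)

end LeftQuasigroup

open LeftQuasigroup

lemma L_mem_LMlt {Q : Type*} (S : LeftQuasigroup Q) (a : Q) : S.L a ∈ S.LMlt :=
  Subgroup.subset_closure ⟨a, rfl⟩

lemma L_op {Q : Type*} (S : LeftQuasigroup Q) (hSD : S.IsRack) (a c : Q) :
    S.L (S.op a c) = S.L a * S.L c * (S.L a)⁻¹ := by
  ext z
  show S.op (S.op a c) z = S.op a (S.op c (S.dv a z))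
  rw [hSD a c (S.dv a z), S.op_dv]

lemma L_dv {Q : Type*} (S : LeftQuasigroup Q) (hSD : S.IsRack) (a c : Q) :
    S.L (S.dv a c) = (S.L a)⁻¹ * S.L c * S.L a := by
  have h := L_op S hSD a (S.dv a c)
  rw [S.op_dv] at h
  rw [h]; group

/-- For a rack `Q` and `N ≤ Dis(Q)` normal in `LMlt(Q)`, the relation
`con_N = {(a,b) : L_a L_b⁻¹ ∈ N}` is a congruence of `Q`. -/
theorem stmt_11 {Q : Type*} (S : LeftQuasigroup Q) (hSD : S.IsRack)
    (N : Subgroup (Equiv.Perm Q)) (hN1 : N ≤ S.Dis)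
    (hN2 : ∀ g ∈ S.LMlt, ∀ n ∈ N, g * n * g⁻¹ ∈ N) :
    S.IsCongruence (fun a b => S.L a * (S.L b)⁻¹ ∈ N) := by
  have inv_swap : ∀ a b : Q, S.L a * (S.L b)⁻¹ ∈ N → (S.L a)⁻¹ * S.L b ∈ N := by
    intro a b h
    have h2 : ((S.L b)⁻¹ : Equiv.Perm Q) * ((S.L a * (S.L b)⁻¹)⁻¹) * ((S.L b)⁻¹)⁻¹
        ∈ N := hN2 _ (inv_mem (L_mem_LMlt S b)) _ (inv_mem h)
    have : ((S.L b)⁻¹ : Equiv.Perm Q) * ((S.L a * (S.L b)⁻¹)⁻¹) * ((S.L b)⁻¹)⁻¹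
        = (S.L a)⁻¹ * S.L b := by group
    rwa [this] at h2
  refine ⟨⟨?_, ?_, ?_⟩, ?_, ?_⟩
  · intro a; simp only [mul_inv_cancel]; exact one_mem N
  · intro a b h
    have := inv_mem h
    rwa [show (S.L a * (S.L b)⁻¹)⁻¹ = S.L b * (S.L a)⁻¹ by group] at this
  · intro a b c hab hbc
    have := mul_mem hab hbc
    rwa [show (S.L a * (S.L b)⁻¹) * (S.L b * (S.L c)⁻¹) = S.L a * (S.L c)⁻¹ by group]
      at this
  · intro a b c d hab hcd
    have key : S.L (S.op a c) * (S.L (S.op b d))⁻¹ =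
        (S.L a * (S.L c * (S.L d)⁻¹) * (S.L a)⁻¹) *
        ((S.L a * S.L d) * ((S.L a)⁻¹ * S.L b) * (S.L a * S.L d)⁻¹ *
          (S.L a * (S.L b)⁻¹)) := by
      rw [L_op S hSD a c, L_op S hSD b d]; group
    rw [key]
    exact mul_mem (hN2 _ (L_mem_LMlt S a) _ hcd)
      (mul_mem (hN2 _ (mul_mem (L_mem_LMlt S a) (L_mem_LMlt S d)) _ (inv_swap a b hab))
        hab)
  · intro a b c d hab hcd
    have key : S.L (S.dv a c) * (S.L (S.dv b d))⁻¹ =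
        ((S.L a)⁻¹ * (S.L c * (S.L d)⁻¹) * ((S.L a)⁻¹)⁻¹) *
        (((S.L a)⁻¹ * S.L d) * (S.L a * (S.L b)⁻¹) * ((S.L a)⁻¹ * S.L d)⁻¹ *
          ((S.L a)⁻¹ * S.L b)) := by
      rw [L_dv S hSD a c, L_dv S hSD b d]; group
    rw [key]
    exact mul_mem (hN2 _ (inv_mem (L_mem_LMlt S a)) _ hcd)
      (mul_mem
        (hN2 _ (mul_mem (inv_mem (L_mem_LMlt S a)) (L_mem_LMlt S d)) _ hab)
        (inv_swap a b hab))
end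

section
/- Let Q be a faithful quandle, α a congruence, and N ≤ Dis(Q). If every element of N commutes with every element of Dis_α, then N acts α-semiregularly on Q: for every h ∈ N and a ∈ Q with h(a)=a, we have h(b)=b for all b with b α a. -/
open LeftQuasigroup

lemma lmlt_distrib {Q : Type*} (S : LeftQuasigroup Q) (hSD : S.IsRack)
    {h : Equiv.Perm Q} (hh : h ∈ S.LMlt) :
    ∀ x y, h (S.op x y) = S.op (h x) (h y) := by
  induction hh using Subgroup.closure_induction with
  | mem f hf =>
    obtain ⟨a, rfl⟩ := hf
    intro x y; exact hSD a x y
  | one => intro x y; rfl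
  | mul f g _ _ hf hg =>
    intro x y
    simp only [Equiv.Perm.mul_apply]
    rw [hg, hf]
  | inv f _ hf =>
    intro x y
    apply f.injective
    rw [hf]
    simp

lemma dis_le_lmlt {Q : Type*} (S : LeftQuasigroup Q) : S.Dis ≤ S.LMlt := by
  apply Subgroup.closure_le _ |>.mpr
  rintro f ⟨a, b, rfl⟩
  exact mul_mem (Subgroup.subset_closure ⟨a, rfl⟩)
    (inv_mem (Subgroup.subset_closure ⟨b, rfl⟩))

/-- In a faithful quandle, if `N ≤ Dis(Q)` centralizes `Dis_α`, then `N` acts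
`α`-semiregularly. -/
theorem stmt_15 {Q : Type*} (S : LeftQuasigroup Q) (hSD : S.IsRack)
    (hidem : ∀ x, S.op x x = x)
    (hfaith : ∀ a b : Q, (∀ c, S.op a c = S.op b c) → a = b)
    (α : Q → Q → Prop) (hα : S.IsCongruence α)
    (N : Subgroup (Equiv.Perm Q)) (hN : N ≤ S.Dis)
    (hcomm : ∀ n ∈ N, ∀ g ∈ S.DisRel α, n * g = g * n) :
    ∀ h ∈ N, ∀ a b : Q, α a b → h a = a → h b = b := by
  intro h hh a b hab ha
  have hdistrib := lmlt_distrib S hSD (dis_le_lmlt S (hN hh))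
  have hg : S.L a * (S.L b)⁻¹ ∈ S.DisRel α :=
    Subgroup.subset_closure ⟨1, one_mem _, a, b, hab, by group⟩
  have hc := hcomm h hh _ hg
  -- pointwise consequence
  have hLa : ∀ c, h (S.op a c) = S.op a (h c) := by
    intro c; rw [hdistrib a c, ha]
  have key : ∀ c : Q, S.op a (S.dv b (h c)) = S.op a (h (S.dv b c)) := by
    intro c
    have := congrArg (fun f : Equiv.Perm Q => f c) hc.symm
    simpa [L, Equiv.Perm.mul_apply, Equiv.mul_def, Equiv.trans_apply,
      Equiv.Perm.inv_def, Equiv.symm_apply_eq, hLa] using this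
  have hLb : ∀ c, h (S.dv b c) = S.dv (h b) (h c) := by
    intro c
    apply (S.L (h b)).injective
    show S.op (h b) _ = S.op (h b) _
    rw [S.op_dv, ← hdistrib b (S.dv b c), S.op_dv]
  -- derive dv (h b) z = dv b z for all z
  have hdv : ∀ z, S.dv (h b) z = S.dv b z := by
    intro z
    obtain ⟨c, rfl⟩ : ∃ c, h c = z := ⟨h⁻¹ z, by simp⟩
    have := key c
    rw [hLb] at this
    have h2 : S.dv b (h c) = S.dv (h b) (h c) := by
      have := congrArg (S.dv a) this
      rwa [S.dv_op, S.dv_op] at this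
    exact h2.symm
  apply hfaith
  intro c
  calc S.op (h b) c = S.op (h b) (S.dv (h b) (S.op b c)) := by
        rw [hdv, S.dv_op]
      _ = S.op b c := S.op_dv _ _
end
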